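/- In a Stable Roommates instance with strict preferences, the set of matched agents is the same in every stable matching; consequently, if an agent is matched in some stable matching, it is matched in all stable matchings. -/
import Mathlib


/-- A housing market: each agent `a` has a strict partial order `pref a` on agents,
where `pref a b c` means `a` prefers the house of `c` to the house of `b` (i.e. `b ≺_a c`). -/
structure HousingMarket (N : Type) where
  pref : N → N → N → Prop
  irrefl : ∀ a b, ¬ pref a b b
  trans : ∀ a b c d, pref a b c → pref a c d → pref a b d

variable {N : Type} [Fintype N] [DecidableEq N]

/-- `(a,b)` is an arc of the acceptability graph `G^H` (including all loops). -/
def accepts (H : HousingMarket N) (a b : N) : Prop := a = b ∨ H.pref a a b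

/-- An allocation: a permutation of the agents all of whose arcs are acceptable. -/
def IsAllocation (H : HousingMarket N) (X : N → N) : Prop :=
  Function.Bijective X ∧ ∀ a, accepts H a (X a)

/-- A blocking cycle for `X`: a directed cycle of the acceptability graph (given as a
nonempty duplicate-free list, with successor `c.next`) on which every agent strictly
prefers the house of her successor to the house she gets in `X`. -/
def IsBlockingCycle (H : HousingMarket N) (X : N → N) (c : List N) : Prop :=
  c ≠ [] ∧ c.Nodup ∧
    ∀ (a : N) (h : a ∈ c), accepts H a (c.next a h) ∧ H.pref a (X a) (c.next a h)

/-- `X` is in the core of `H`. -/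
def InCore (H : HousingMarket N) (X : N → N) : Prop :=
  IsAllocation H X ∧ ∀ c : List N, ¬ IsBlockingCycle H X c

/-- A digraph (given by its arc relation `R`) has a directed cycle. -/
def HasCycle (R : N → N → Prop) : Prop :=
  ∃ c : List N, c ≠ [] ∧ c.Nodup ∧ ∀ (a : N) (h : a ∈ c), R a (c.next a h)

/-- Preferences of every agent are strict total orders on her acceptable set. -/
def StrictPrefs (H : HousingMarket N) : Prop :=
  ∀ a b c, accepts H a b → accepts H a c → b ≠ c → H.pref a b c ∨ H.pref a c b

/-- `H'` is a `(p,q)`-improvement of `H`: only `q`'s preferences change, they agree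
on `N \ {p}`, and the value of `p`'s house weakly rises for `q`. -/
def IsPQImprovement (H H' : HousingMarket N) (p q : N) : Prop :=
  (∀ a, a ≠ q → H.pref a = H'.pref a) ∧
  (∀ a b, a ≠ p → b ≠ p → (H.pref q a b ↔ H'.pref q a b)) ∧
  (∀ a, H.pref q a p → H'.pref q a p)

/-- `H'` is a `p`-improvement of `H`: a finite composition of `(p,q)`-improvements. -/
def IsPImprovement (H H' : HousingMarket N) (p : N) : Prop :=
  Relation.ReflTransGen (fun K K' => ∃ q, IsPQImprovement K K' p q) H H'

/-- Mutual acceptability for Stable Roommates: `a ≺_a b` iff `b ≺_b a`. -/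
def Mutual (H : HousingMarket N) : Prop := ∀ a b, H.pref a a b ↔ H.pref b b a

/-- A matching: an involution on agents, matched pairs being mutually acceptable
(`M a = a` means `a` is unmatched). -/
def IsMatching (H : HousingMarket N) (M : N → N) : Prop :=
  (∀ a, M (M a) = a) ∧ ∀ a, M a ≠ a → H.pref a a (M a)

/-- `{a,b}` is a blocking pair for `M`: each of them is unmatched or prefers
the other to her partner (using the convention `M a = a` for unmatched agents). -/
def BlockingPair (H : HousingMarket N) (M : N → N) (a b : N) : Prop :=
  a ≠ b ∧ H.pref a (M a) b ∧ H.pref b (M b) a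

/-- A stable matching. -/
def IsStableMatching (H : HousingMarket N) (M : N → N) : Prop :=
  IsMatching H M ∧ ∀ a b, ¬ BlockingPair H M a b

/-- The alternating walk: start at `a`, then alternately follow `M` and `M'`. -/
private def srWalk (M M' : N → N) (a : N) : ℕ → N
  | 0 => a
  | n+1 => (if Even n then M else M') (srWalk M M' a n)

/-- The matching used at step `n` of the walk. -/
private def srF (M M' : N → N) (n : ℕ) : N → N := if Even n then M else M'

private lemma srWalk_succ (M M' : N → N) (a : N) (n : ℕ) :
    srWalk M M' a (n+1) = srF M M' n (srWalk M M' a n) := rfl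

private lemma srF_congr (M M' : N → N) {m n : ℕ} (h : Even m ↔ Even n) :
    srF M M' m = srF M M' n := by
  unfold srF
  by_cases hm : Even m
  · rw [if_pos hm, if_pos (h.mp hm)]
  · rw [if_neg hm, if_neg (fun hn => hm (h.mpr hn))]

private lemma srF_invol {M M' : N → N} (hM : ∀ z, M (M z) = z) (hM' : ∀ z, M' (M' z) = z)
    (n : ℕ) (z : N) : srF M M' n (srF M M' n z) = z := by
  unfold srF; split
  · exact hM z
  · exact hM' z

/-- The inductive step: if `x` is matched in both stable matchings `K`, `K'` and prefers her
`K'`-partner, then `y := K' x` is matched in both and prefers her `K`-partner (to `K' y = x`). -/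
private lemma srStep (H : HousingMarket N) (hmut : Mutual H) (hstrict : StrictPrefs H)
    {K K' : N → N} (hK : IsStableMatching H K) (hK' : IsStableMatching H K')
    {x : N} (hx : K x ≠ x) (hx' : K' x ≠ x) (hpref : H.pref x (K x) (K' x)) :
    K (K' x) ≠ K' x ∧ K' (K' x) ≠ K' x ∧ H.pref (K' x) (K' (K' x)) (K (K' x)) := by
  set y := K' x with hy
  have hinv : K' y = x := hK'.1.1 x
  have hxy : x ≠ y := fun h => hx' h.symm
  have haccx : H.pref x x y := hK'.1.2 x hx'
  have haccy : H.pref y y x := (hmut x y).mp haccx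
  have hKy : K y ≠ y := by
    intro h
    exact hK.2 x y ⟨hxy, hpref, by rw [h]; exact haccy⟩
  have hKyx : K y ≠ x := by
    intro h
    have : K x = y := by rw [← h, hK.1.1 y]
    rw [this] at hpref
    exact H.irrefl x y hpref
  have hnb : ¬ H.pref y (K y) x := fun hb => hK.2 x y ⟨hxy, hpref, hb⟩
  have hst := hstrict y (K y) x (Or.inr (hK.1.2 y hKy)) (Or.inr haccy) hKyx
  refine ⟨hKy, by rw [hinv]; exact hxy, ?_⟩
  rw [hinv]
  rcases hst with h | h
  · exact absurd h hnb
  · exact h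

/-- The base step: `y := M a` (with `a` matched in `M`, single in `M'`) is matched in both
and prefers her `M'`-partner to `M y = a`. -/
private lemma srBase (H : HousingMarket N) (hmut : Mutual H) (hstrict : StrictPrefs H)
    {M M' : N → N} (hM : IsStableMatching H M) (hM' : IsStableMatching H M')
    {a : N} (ha : M a ≠ a) (ha' : M' a = a) :
    M (M a) ≠ M a ∧ M' (M a) ≠ M a ∧ H.pref (M a) (M (M a)) (M' (M a)) := by
  set y := M a with hy
  have hMy : M y = a := hM.1.1 a
  have hay : a ≠ y := fun h => ha h.symm
  have hacc : H.pref a a y := hM.1.2 a ha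
  have haccy : H.pref y y a := (hmut a y).mp hacc
  have hM'y : M' y ≠ y := by
    intro h
    exact hM'.2 a y ⟨hay, by rw [ha']; exact hacc, by rw [h]; exact haccy⟩
  have hM'ya : M' y ≠ a := by
    intro h
    have : M' a = y := by rw [← h, hM'.1.1 y]
    rw [ha'] at this
    exact hay this
  have hnb : ¬ H.pref y (M' y) a :=
    fun hb => hM'.2 a y ⟨hay, by rw [ha']; exact hacc, hb⟩
  have hst := hstrict y (M' y) a (Or.inr (hM'.1.2 y hM'y)) (Or.inr haccy) hM'ya
  refine ⟨by rw [hMy]; exact hay, hM'y, ?_⟩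
  rw [hMy]
  rcases hst with h | h
  · exact absurd h hnb
  · exact h

/-- The invariant along the walk. -/
private lemma srInv (H : HousingMarket N) (hmut : Mutual H) (hstrict : StrictPrefs H)
    {M M' : N → N} (hM : IsStableMatching H M) (hM' : IsStableMatching H M')
    {a : N} (ha : M a ≠ a) (ha' : M' a = a) (n : ℕ) :
    M (srWalk M M' a (n+1)) ≠ srWalk M M' a (n+1) ∧
    M' (srWalk M M' a (n+1)) ≠ srWalk M M' a (n+1) ∧
    (Even n → H.pref (srWalk M M' a (n+1)) (M (srWalk M M' a (n+1)))
        (M' (srWalk M M' a (n+1)))) ∧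
    (¬ Even n → H.pref (srWalk M M' a (n+1)) (M' (srWalk M M' a (n+1)))
        (M (srWalk M M' a (n+1)))) := by
  induction n with
  | zero =>
      have hw : srWalk M M' a 1 = M a := by simp [srWalk]
      obtain ⟨h1, h2, h3⟩ := srBase H hmut hstrict hM hM' ha ha'
      rw [hw]
      exact ⟨h1, h2, fun _ => h3, fun h => absurd (Even.zero) h⟩
  | succ n ih =>
      obtain ⟨h1, h2, h3, h4⟩ := ih
      rcases Nat.even_or_odd n with he | ho
      · -- n even, so step n+1 uses M' : srWalk (n+2) = M' (srWalk (n+1))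
        have hw : srWalk M M' a (n+2) = M' (srWalk M M' a (n+1)) := by
          have : ¬ Even (n+1) := by simpa [Nat.even_add_one] using he
          simp [srWalk, this]
        obtain ⟨g1, g2, g3⟩ := srStep H hmut hstrict hM hM' h1 h2 (h3 he)
        rw [hw]
        exact ⟨g1, g2, fun hp => absurd hp (by simpa [Nat.even_add_one] using he),
          fun _ => g3⟩
      · -- n odd, so step n+1 uses M : srWalk (n+2) = M (srWalk (n+1))
        have hne : ¬ Even n := Nat.not_even_iff_odd.mpr ho
        have hw : srWalk M M' a (n+2) = M (srWalk M M' a (n+1)) := by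
          have : Even (n+1) := by simpa [Nat.even_add_one] using hne
          simp [srWalk, this]
        obtain ⟨g1, g2, g3⟩ := srStep H hmut hstrict hM' hM h2 h1 (h4 hne)
        rw [hw]
        exact ⟨g2, g1, fun _ => g3,
          fun hp => absurd (by simpa [Nat.even_add_one] using hne) hp⟩

/-- Consecutive points of the walk are distinct. -/
private lemma srNe (H : HousingMarket N) (hmut : Mutual H) (hstrict : StrictPrefs H)
    {M M' : N → N} (hM : IsStableMatching H M) (hM' : IsStableMatching H M')
    {a : N} (ha : M a ≠ a) (ha' : M' a = a) (n : ℕ) :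
    srWalk M M' a (n+1) ≠ srWalk M M' a n := by
  cases n with
  | zero => simpa [srWalk] using ha
  | succ n =>
      obtain ⟨h1, h2, _, _⟩ := srInv H hmut hstrict hM hM' ha ha' n
      rcases Nat.even_or_odd (n+1) with he | ho
      · have hw : srWalk M M' a (n+2) = M (srWalk M M' a (n+1)) := by
          simp [srWalk, he]
        rw [hw]; exact h1
      · have hne : ¬ Even (n+1) := Nat.not_even_iff_odd.mpr ho
        have hw : srWalk M M' a (n+2) = M' (srWalk M M' a (n+1)) := by
          simp [srWalk, hne]
        rw [hw]; exact h2

/-- The key contradiction: no agent can be matched in one stable matching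
and unmatched in another. -/
private lemma srKey (H : HousingMarket N) (hmut : Mutual H) (hstrict : StrictPrefs H)
    {M M' : N → N} (hM : IsStableMatching H M) (hM' : IsStableMatching H M')
    {a : N} (ha : M a ≠ a) (ha' : M' a = a) : False := by
  set x := srWalk M M' a
  have hinvol : ∀ n z, srF M M' n (srF M M' n z) = z := srF_invol hM.1.1 hM'.1.1
  have hpred : ∀ n, x n = srF M M' n (x (n+1)) := by
    intro n
    show srWalk M M' a n = srF M M' n (srWalk M M' a (n+1))
    rw [srWalk_succ M M' a n, hinvol]
  have hne : ∀ n, x (n+1) ≠ x n := srNe H hmut hstrict hM hM' ha ha'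
  -- find a minimal repetition in the walk
  have hrep : ∃ j, ∃ m, m < j ∧ x m = x j := by
    obtain ⟨i, j, hij, he⟩ := Finite.exists_ne_map_eq_of_infinite x
    rcases hij.lt_or_gt with h | h
    · exact ⟨j, i, h, he⟩
    · exact ⟨i, j, h, he.symm⟩
  classical
  obtain ⟨i, hij, hxij⟩ := Nat.find_spec hrep
  obtain ⟨l, hl⟩ : ∃ l, Nat.find hrep = l + 1 := ⟨Nat.find hrep - 1, by omega⟩
  rw [hl] at hij hxij
  have hPl : ¬ ∃ m, m < l ∧ x m = x l := Nat.find_min hrep (by omega)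
  have hil : i < l := by
    rcases Nat.lt_succ_iff_lt_or_eq.mp hij with h | rfl
    · exact h
    · exact absurd hxij.symm (hne i)
  have hxl : x l = srF M M' l (x i) := by rw [hpred l, hxij]
  by_cases hp : Even i ↔ Even l
  · -- i and l have the same parity: compare successor of i with l
    have hi1 : i + 1 ≠ l := by
      intro h
      rw [← h, Nat.even_add_one] at hp
      tauto
    have : x (i+1) = x l := by
      show srWalk M M' a (i+1) = srWalk M M' a l
      rw [srWalk_succ M M' a i, srF_congr M M' hp]
      exact hxl.symm
    exact hPl ⟨i+1, by omega, this⟩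
  · -- different parity: compare predecessor of i with l
    cases i with
    | zero =>
        have hol : ¬ Even l := fun h => hp (by simp [h])
        have : x l = x 0 := by
          have : srF M M' l = M' := by simp [srF, hol]
          rw [hxl, this]
          show M' a = a
          exact ha'
        exact hPl ⟨0, hil, this.symm⟩
    | succ k =>
        have hkl : Even k ↔ Even l := by
          rw [Nat.even_add_one] at hp
          by_cases h : Even k
          · simp [h] at hp ⊢; tauto
          · simp [h] at hp ⊢; tauto
        have : x k = x l := by
          rw [hpred k, srF_congr M M' hkl, hxij, ← hpred l]
        exact hPl ⟨k, by omega, this⟩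

/-- "Lone Wolf" theorem: in a Stable Roommates instance with strict
preferences, the set of matched agents is the same in every stable matching. -/
theorem stmt16 (H : HousingMarket N) (hmut : Mutual H) (hstrict : StrictPrefs H)
    (M M' : N → N) (hM : IsStableMatching H M) (hM' : IsStableMatching H M') :
    ∀ a, M a = a ↔ M' a = a := by
  intro a
  constructor
  · intro h
    by_contra h'
    exact srKey H hmut hstrict hM' hM h' h
  · intro h
    by_contra h'
    exact srKey H hmut hstrict hM hM' h' h
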